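/- Let E be a real inner product space, let e₁, e₂ ∈ E be orthonormal, let k ≥ 2 be an integer, and for 0 ≤ j < k let R_j : E → E be the linear isometry fixing the orthogonal complement of span{e₁,e₂} pointwise and acting on span{e₁,e₂} by R_j e₁ = cos(2πj/k) e₁ + sin(2πj/k) e₂ and R_j e₂ = −sin(2πj/k) e₁ + cos(2πj/k) e₂ (the rotation of angle 2πj/k about the plane P = span{e₁,e₂}^⊥). Let m ≥ 1 and let w be an alternating m-form on E of the shape w = e₁♭ ∧ φ + e₂♭ ∧ ψ, where φ and ψ are alternating (m−1)-forms on E that vanish whenever one of their arguments lies in span{e₁,e₂}; explicitly, assume that for all v₁,…,v_m ∈ E, w(v₁,…,v_m) = ∑_{i=1}^{m} (−1)^{i−1} [ ⟨v_i, e₁⟩ · φ(v₁,…,v̂_i,…,v_m) + ⟨v_i, e₂⟩ · ψ(v₁,…,v̂_i,…,v_m) ], where v̂_i denotes omission of the i-th argument. Then the pullbacks w_j = R_j^* w (defined by (R_j^*w)(v₁,…,v_m) = w(R_j v₁,…,R_j v_m)) have vanishing sum: ∑_{j=0}^{k-1} w(R_j v₁, …, R_j v_m) = 0 for all v₁,…,v_m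 ∈ E. -/

import Mathlib

open scoped BigOperators RealInnerProductSpace

lemma sum_exp_zero (k : ℕ) (hk : 2 ≤ k) :
    ∑ j ∈ Finset.range k, Complex.exp (2 * Real.pi * j / k * Complex.I) = 0 := by
  have hk0 : (k : ℂ) ≠ 0 := Nat.cast_ne_zero.2 (by omega)
  have hprim : IsPrimitiveRoot (Complex.exp (2 * Real.pi * Complex.I / k)) k :=
    Complex.isPrimitiveRoot_exp k (by omega)
  set ζ : ℂ := Complex.exp (2 * Real.pi * Complex.I / k) with hζ
  have hpow : ∀ j : ℕ, ζ ^ j = Complex.exp (2 * Real.pi * j / k * Complex.I) := by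
    intro j
    rw [hζ, ← Complex.exp_nat_mul]
    ring_nf
  have hζk : ζ ^ k = 1 := hprim.pow_eq_one
  have hζ1 : ζ ≠ 1 := hprim.ne_one (by omega)
  have := geom_sum_eq hζ1 k
  calc ∑ j ∈ Finset.range k, Complex.exp (2 * Real.pi * j / k * Complex.I)
      = ∑ j ∈ Finset.range k, ζ ^ j := by
        exact Finset.sum_congr rfl fun j _ => (hpow j).symm
    _ = (ζ ^ k - 1) / (ζ - 1) := this
    _ = 0 := by rw [hζk]; simp

lemma sum_cos_zero (k : ℕ) (hk : 2 ≤ k) :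
    ∑ j ∈ Finset.range k, Real.cos (2 * Real.pi * j / k) = 0 := by
  have h := sum_exp_zero k hk
  have : ∀ j : ℕ, Complex.exp (2 * Real.pi * j / k * Complex.I)
      = Complex.exp (((2 * Real.pi * j / k : ℝ) : ℂ) * Complex.I) := by
    intro j; push_cast; ring_nf
  rw [Finset.sum_congr rfl fun j _ => this j] at h
  have h2 := congrArg Complex.re h
  rw [Complex.re_sum] at h2
  simp only [Complex.exp_ofReal_mul_I_re] at h2
  simpa using h2

lemma sum_sin_zero (k : ℕ) (hk : 2 ≤ k) :
    ∑ j ∈ Finset.range k, Real.sin (2 * Real.pi * j / k) = 0 := by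
  have h := sum_exp_zero k hk
  have : ∀ j : ℕ, Complex.exp (2 * Real.pi * j / k * Complex.I)
      = Complex.exp (((2 * Real.pi * j / k : ℝ) : ℂ) * Complex.I) := by
    intro j; push_cast; ring_nf
  rw [Finset.sum_congr rfl fun j _ => this j] at h
  have h2 := congrArg Complex.im h
  rw [Complex.im_sum] at h2
  simp only [Complex.exp_ofReal_mul_I_im] at h2
  simpa using h2

lemma phi_invariant {E : Type*} [NormedAddCommGroup E] [InnerProductSpace ℝ E]
    (e₁ e₂ : E) {m : ℕ} (φ : E [⋀^Fin m]→ₗ[ℝ] ℝ)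
    (hφ : ∀ (x : Fin m → E) (i : Fin m) (c₁ c₂ : ℝ), x i = c₁ • e₁ + c₂ • e₂ → φ x = 0)
    (v : Fin m → E) (c₁ c₂ : Fin m → ℝ) :
    φ (fun i => v i + (c₁ i • e₁ + c₂ i • e₂)) = φ v := by
  have key : ∀ s : Finset (Fin m),
      φ (fun i => if i ∈ s then v i + (c₁ i • e₁ + c₂ i • e₂) else v i) = φ v := by
    intro s
    induction s using Finset.induction_on with
    | empty => simp
    | @insert a s ha ih =>
      have hfun : (fun i => if i ∈ insert a s then v i + (c₁ i • e₁ + c₂ i • e₂) else v i)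
          = Function.update (fun i => if i ∈ s then v i + (c₁ i • e₁ + c₂ i • e₂) else v i)
            a (v a + (c₁ a • e₁ + c₂ a • e₂)) := by
        funext i
        rcases eq_or_ne i a with rfl | hia
        · simp [ha]
        · simp [Function.update_of_ne hia, Finset.mem_insert, hia]
      rw [hfun, AlternatingMap.map_update_add]
      have h0 : φ (Function.update
          (fun i => if i ∈ s then v i + (c₁ i • e₁ + c₂ i • e₂) else v i)
          a (c₁ a • e₁ + c₂ a • e₂)) = 0 := by
        apply hφ _ a (c₁ a) (c₂ a)
        simp
      rw [h0, add_zero]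
      have heq : Function.update
          (fun i => if i ∈ s then v i + (c₁ i • e₁ + c₂ i • e₂) else v i) a (v a)
          = fun i => if i ∈ s then v i + (c₁ i • e₁ + c₂ i • e₂) else v i := by
        funext i
        rcases eq_or_ne i a with rfl | hia
        · simp [ha]
        · simp [Function.update_of_ne hia]
      rw [heq, ih]
  have := key Finset.univ
  simpa using this

/-- Rotated calibrations of the shape `w = e₁♭ ∧ φ + e₂♭ ∧ ψ` have vanishing sum. -/
theorem stmt1 {E : Type*} [NormedAddCommGroup E] [InnerProductSpace ℝ E]
    (e₁ e₂ : E) (he₁ : ‖e₁‖ = 1) (he₂ : ‖e₂‖ = 1) (he : ⟪e₁, e₂⟫ = 0)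
    (k : ℕ) (hk : 2 ≤ k) (R : ℕ → E →ₗᵢ[ℝ] E)
    (hR₁ : ∀ j, R j e₁ =
      Real.cos (2 * Real.pi * j / k) • e₁ + Real.sin (2 * Real.pi * j / k) • e₂)
    (hR₂ : ∀ j, R j e₂ =
      (-Real.sin (2 * Real.pi * j / k)) • e₁ + Real.cos (2 * Real.pi * j / k) • e₂)
    (hRfix : ∀ (j : ℕ) (x : E), ⟪x, e₁⟫ = 0 → ⟪x, e₂⟫ = 0 → R j x = x)
    (m : ℕ)
    (w : E [⋀^Fin (m + 1)]→ₗ[ℝ] ℝ) (φ ψ : E [⋀^Fin m]→ₗ[ℝ] ℝ)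
    (hφ : ∀ (x : Fin m → E) (i : Fin m) (c₁ c₂ : ℝ), x i = c₁ • e₁ + c₂ • e₂ → φ x = 0)
    (hψ : ∀ (x : Fin m → E) (i : Fin m) (c₁ c₂ : ℝ), x i = c₁ • e₁ + c₂ • e₂ → ψ x = 0)
    (hw : ∀ x : Fin (m + 1) → E,
      w x = ∑ i : Fin (m + 1), (-1 : ℝ) ^ (i : ℕ) *
        (⟪x i, e₁⟫ * φ (i.removeNth x) + ⟪x i, e₂⟫ * ψ (i.removeNth x))) :
    ∀ x : Fin (m + 1) → E, ∑ j ∈ Finset.range k, w (fun i => R j (x i)) = 0 := by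
  intro x
  -- basic orthonormality facts
  have he11 : ⟪e₁, e₁⟫ = (1 : ℝ) := by
    rw [real_inner_self_eq_norm_mul_norm, he₁]; norm_num
  have he22 : ⟪e₂, e₂⟫ = (1 : ℝ) := by
    rw [real_inner_self_eq_norm_mul_norm, he₂]; norm_num
  have he21 : ⟪e₂, e₁⟫ = (0 : ℝ) := by rw [real_inner_comm]; exact he
  -- decomposition of x i
  set a : Fin (m + 1) → ℝ := fun i => ⟪x i, e₁⟫ with ha
  set b : Fin (m + 1) → ℝ := fun i => ⟪x i, e₂⟫ with hb
  set p : Fin (m + 1) → E := fun i => x i - (a i • e₁ + b i • e₂) with hp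
  set c : ℕ → ℝ := fun j => Real.cos (2 * Real.pi * j / k) with hc
  set s : ℕ → ℝ := fun j => Real.sin (2 * Real.pi * j / k) with hs
  have hp1 : ∀ i, ⟪p i, e₁⟫ = (0 : ℝ) := by
    intro i
    simp [hp, inner_sub_left, inner_add_left, real_inner_smul_left, he11, he21, ha, he₁]
  have hp2 : ∀ i, ⟪p i, e₂⟫ = (0 : ℝ) := by
    intro i
    simp [hp, inner_sub_left, inner_add_left, real_inner_smul_left, he22, he, hb, he₂]
  have hxp : ∀ i, x i = p i + (a i • e₁ + b i • e₂) := by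
    intro i; simp [hp]
  have hRx : ∀ (j : ℕ) (i : Fin (m + 1)), R j (x i)
      = p i + ((a i * c j - b i * s j) • e₁ + (a i * s j + b i * c j) • e₂) := by
    intro j i
    have hfix := hRfix j (p i) (hp1 i) (hp2 i)
    calc R j (x i) = R j (p i + (a i • e₁ + b i • e₂)) := by rw [← hxp i]
      _ = R j (p i) + (a i • R j e₁ + b i • R j e₂) := by
          simp [map_add, map_smul]
      _ = p i + (a i • (c j • e₁ + s j • e₂) + b i • ((-s j) • e₁ + c j • e₂)) := by
          rw [hfix, hR₁, hR₂]
      _ = p i + ((a i * c j - b i * s j) • e₁ + (a i * s j + b i * c j) • e₂) := by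
          module
  have hRx1 : ∀ (j : ℕ) (i : Fin (m + 1)), ⟪R j (x i), e₁⟫ = a i * c j - b i * s j := by
    intro j i
    rw [hRx j i]
    simp [inner_add_left, real_inner_smul_left, he11, he21, hp1 i, he₁]
  have hRx2 : ∀ (j : ℕ) (i : Fin (m + 1)), ⟪R j (x i), e₂⟫ = a i * s j + b i * c j := by
    intro j i
    rw [hRx j i]
    simp [inner_add_left, real_inner_smul_left, he22, he, hp2 i, he₂]
  -- the forms φ, ψ only see the orthogonal parts
  have hremove : ∀ (j : ℕ) (i : Fin (m + 1)),
      i.removeNth (fun l => R j (x l))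
        = fun l => (fun l' => p (i.succAbove l')) l
            + ((fun l' => a (i.succAbove l') * c j - b (i.succAbove l') * s j) l • e₁
             + (fun l' => a (i.succAbove l') * s j + b (i.succAbove l') * c j) l • e₂) := by
    intro j i
    funext l
    exact hRx j (i.succAbove l)
  have hφr : ∀ (j : ℕ) (i : Fin (m + 1)),
      φ (i.removeNth (fun l => R j (x l))) = φ (fun l => p (i.succAbove l)) := by
    intro j i
    rw [hremove j i]
    exact phi_invariant e₁ e₂ φ hφ _ _ _
  have hψr : ∀ (j : ℕ) (i : Fin (m + 1)),
      ψ (i.removeNth (fun l => R j (x l))) = ψ (fun l => p (i.succAbove l)) := by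
    intro j i
    rw [hremove j i]
    exact phi_invariant e₁ e₂ ψ hψ _ _ _
  set Φ : Fin (m + 1) → ℝ := fun i => φ (fun l => p (i.succAbove l)) with hΦ
  set Ψ : Fin (m + 1) → ℝ := fun i => ψ (fun l => p (i.succAbove l)) with hΨ
  set A : ℝ := ∑ i : Fin (m + 1), (-1 : ℝ) ^ (i : ℕ) * (a i * Φ i + b i * Ψ i) with hA
  set B : ℝ := ∑ i : Fin (m + 1), (-1 : ℝ) ^ (i : ℕ) * (a i * Ψ i - b i * Φ i) with hB
  have hwj : ∀ j : ℕ, w (fun i => R j (x i)) = c j * A + s j * B := by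
    intro j
    rw [hw]
    have : ∀ i : Fin (m + 1), (-1 : ℝ) ^ (i : ℕ) *
        (⟪R j (x i), e₁⟫ * φ (i.removeNth (fun l => R j (x l)))
          + ⟪R j (x i), e₂⟫ * ψ (i.removeNth (fun l => R j (x l))))
        = c j * ((-1 : ℝ) ^ (i : ℕ) * (a i * Φ i + b i * Ψ i))
          + s j * ((-1 : ℝ) ^ (i : ℕ) * (a i * Ψ i - b i * Φ i)) := by
      intro i
      rw [hRx1 j i, hRx2 j i, hφr j i, hψr j i]
      simp only [hΦ, hΨ]
      ring
    rw [Finset.sum_congr rfl fun i _ => this i, Finset.sum_add_distrib,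
      ← Finset.mul_sum, ← Finset.mul_sum, ← hA, ← hB]
  rw [Finset.sum_congr rfl fun j _ => hwj j, Finset.sum_add_distrib,
    ← Finset.sum_mul, ← Finset.sum_mul]
  have hcos : ∑ j ∈ Finset.range k, c j = 0 := sum_cos_zero k hk
  have hsin : ∑ j ∈ Finset.range k, s j = 0 := sum_sin_zero k hk
  rw [hcos, hsin]
  ring
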